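/- Let A be a finite nonempty subset of ℤ. Then there exists M such that for every integer m ≥ M and every integer t ≥ 1, the set A_t := { Σ_{i=1}^{t} a_i·m^(i−1) : a_1,...,a_t ∈ A } satisfies |A_t + A_t| = |A+A|^t and |A_t − A_t| = |A−A|^t. -/
import Mathlib


open Finset Pointwise

/-- Digit expansions with bounded digits in a large base are injective. -/
lemma digit_inj (S : Finset ℤ) (C : ℤ) (hS : ∀ x ∈ S, |x| ≤ C) (m : ℤ)
    (hm : 2 * C < m) : ∀ (t : ℕ) (a b : Fin t → ℤ), (∀ i, a i ∈ S) →
    (∀ i, b i ∈ S) →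
    ∑ i : Fin t, a i * m ^ (i : ℕ) = ∑ i : Fin t, b i * m ^ (i : ℕ) → a = b := by
  intro t
  induction t with
  | zero => intro a b _ _ _; funext i; exact i.elim0
  | succ t ih =>
    intro a b ha hb h
    have key : ∀ c : Fin (t + 1) → ℤ,
        ∑ i : Fin (t + 1), c i * m ^ (i : ℕ) =
          c 0 + m * ∑ i : Fin t, c i.succ * m ^ (i : ℕ) := by
      intro c
      rw [Fin.sum_univ_succ, Finset.mul_sum]
      simp only [Fin.val_zero, pow_zero, mul_one, Fin.val_succ, pow_succ]
      congr 1
      exact Finset.sum_congr rfl fun i _ => by ring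
    rw [key a, key b] at h
    have hC0 : 0 ≤ C := le_trans (abs_nonneg _) (hS _ (ha 0))
    have hmpos : 0 < m := lt_of_le_of_lt (by linarith) hm
    have hdvd : m ∣ a 0 - b 0 :=
      ⟨(∑ i : Fin t, b i.succ * m ^ (i : ℕ)) -
        (∑ i : Fin t, a i.succ * m ^ (i : ℕ)), by linarith [h]⟩
    have habs : |a 0 - b 0| < m := by
      calc |a 0 - b 0| ≤ |a 0| + |b 0| := abs_sub _ _
        _ ≤ C + C := add_le_add (hS _ (ha 0)) (hS _ (hb 0))
        _ < m := by linarith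
    have h0 : a 0 = b 0 := by
      have := Int.eq_zero_of_abs_lt_dvd hdvd habs
      omega
    have htail : (fun i : Fin t => a i.succ) = fun i : Fin t => b i.succ := by
      apply ih _ _ (fun i => ha i.succ) (fun i => hb i.succ)
      have hmul : m * ∑ i : Fin t, a i.succ * m ^ (i : ℕ) =
          m * ∑ i : Fin t, b i.succ * m ^ (i : ℕ) := by linarith [h]
      exact mul_left_cancel₀ (ne_of_gt hmpos) hmul
    funext i
    refine Fin.cases h0 (fun j => ?_) i
    exact congrFun htail j

theorem base_expansion (A : Finset ℤ) (hA : A.Nonempty) :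
    ∃ M : ℤ, ∀ m : ℤ, M ≤ m → ∀ t : ℕ, 1 ≤ t →
      ∀ At : Finset ℤ,
        At = (Fintype.piFinset (fun _ : Fin t => A)).image
          (fun a => ∑ i : Fin t, a i * m ^ (i : ℕ)) →
        (At + At).card = (A + A).card ^ t ∧
        (At - At).card = (A - A).card ^ t := by
  set C : ℤ := A.sup' hA (fun x => |x|) with hC
  have hCb : ∀ x ∈ A, |x| ≤ C := fun x hx => Finset.le_sup' _ hx
  refine ⟨4 * C + 1, fun m hm t _ At hAt => ?_⟩
  have hSadd : ∀ x ∈ A + A, |x| ≤ 2 * C := by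
    intro x hx
    obtain ⟨y, hy, z, hz, rfl⟩ := Finset.mem_add.mp hx
    calc |y + z| ≤ |y| + |z| := abs_add_le _ _
      _ ≤ 2 * C := by linarith [hCb y hy, hCb z hz]
  have hSsub : ∀ x ∈ A - A, |x| ≤ 2 * C := by
    intro x hx
    obtain ⟨y, hy, z, hz, rfl⟩ := Finset.mem_sub.mp hx
    calc |y - z| ≤ |y| + |z| := abs_sub _ _
      _ ≤ 2 * C := by linarith [hCb y hy, hCb z hz]
  have hm' : 2 * (2 * C) < m := by linarith
  set f : (Fin t → ℤ) → ℤ := fun a => ∑ i : Fin t, a i * m ^ (i : ℕ) with hf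
  have fadd : ∀ a b : Fin t → ℤ, f (a + b) = f a + f b := by
    intro a b
    simp only [hf, Pi.add_apply, add_mul, Finset.sum_add_distrib]
  have fsub : ∀ a b : Fin t → ℤ, f (a - b) = f a - f b := by
    intro a b
    simp only [hf, Pi.sub_apply, sub_mul, Finset.sum_sub_distrib]
  have hadd : At + At = (Fintype.piFinset (fun _ : Fin t => A + A)).image f := by
    ext x
    simp only [hAt, Finset.mem_add, Finset.mem_image, Fintype.mem_piFinset]
    constructor
    · rintro ⟨y, ⟨a, ha, rfl⟩, z, ⟨b, hb, rfl⟩, rfl⟩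
      exact ⟨a + b, fun i => ⟨a i, ha i, b i, hb i, rfl⟩, fadd a b⟩
    · rintro ⟨g, hg, rfl⟩
      choose a ha b hb hab using hg
      exact ⟨f a, ⟨a, ha, rfl⟩, f b, ⟨b, hb, rfl⟩, by
        rw [← fadd]; congr 1; funext i; exact hab i⟩
  have hsub : At - At = (Fintype.piFinset (fun _ : Fin t => A - A)).image f := by
    ext x
    simp only [hAt, Finset.mem_sub, Finset.mem_image, Fintype.mem_piFinset]
    constructor
    · rintro ⟨y, ⟨a, ha, rfl⟩, z, ⟨b, hb, rfl⟩, rfl⟩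
      exact ⟨a - b, fun i => ⟨a i, ha i, b i, hb i, rfl⟩, fsub a b⟩
    · rintro ⟨g, hg, rfl⟩
      choose a ha b hb hab using hg
      exact ⟨f a, ⟨a, ha, rfl⟩, f b, ⟨b, hb, rfl⟩, by
        rw [← fsub]; congr 1; funext i; exact hab i⟩
  constructor
  · rw [hadd, Finset.card_image_of_injOn, Fintype.card_piFinset]
    · simp
    · intro a ha b hb hfab
      rw [Finset.mem_coe, Fintype.mem_piFinset] at ha hb
      exact digit_inj (A + A) (2 * C) hSadd m hm' t a b (fun i => ha i)
        (fun i => hb i) hfab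
  · rw [hsub, Finset.card_image_of_injOn, Fintype.card_piFinset]
    · simp
    · intro a ha b hb hfab
      rw [Finset.mem_coe, Fintype.mem_piFinset] at ha hb
      exact digit_inj (A - A) (2 * C) hSsub m hm' t a b (fun i => ha i)
        (fun i => hb i) hfab
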